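/- Let a > 0, 0 < m < M < ∞ and let n ≥ 1 be an integer with 2/n ≤ M − m. Then there exists a constant C > 0, depending only on n, m, M and a, such that for every D ∈ Sym3 with |D| ≥ (M+m)/2 and every E ∈ Sym3: if |D| < M − 1/n then |L(D,E)|² ≤ C (1 + |S_n(D)|)^{1+a} Q_n(D,E), and if |D| ≥ M − 1/n then |L_n(D,E)|² ≤ C (1 + |S_n(D)|)^{1+a} Q_n(D,E). -/

import Mathlib

set_option maxHeartbeats 1000000

noncomputable section

/-- Frobenius inner product on 3×3 real matrices: `A·B = Σ_{i,j} A_{ij} B_{ij}`. -/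
def mdot (A B : Matrix (Fin 3) (Fin 3) ℝ) : ℝ := ∑ i, ∑ j, A i j * B i j

/-- Frobenius norm `|A| = (A·A)^{1/2}`. -/
def mnorm (A : Matrix (Fin 3) (Fin 3) ℝ) : ℝ := Real.sqrt (mdot A A)

/-- The approximate constitutive map
`S_n(D) = (|D|−m)_+ (M^a − (min{|D|, M−1/n})^a)^{−1/a} D/|D|`, with `S_n(0) = 0`. -/
def Snmap (a m M : ℝ) (n : ℕ) (D : Matrix (Fin 3) (Fin 3) ℝ) : Matrix (Fin 3) (Fin 3) ℝ :=
  ((max (mnorm D - m) 0) * (M ^ a - (min (mnorm D) (M - 1/(n:ℝ))) ^ a) ^ (-1/a) / mnorm D) • D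

/-- `c_n = M^a − (M−1/n)^a`. -/
def cn (a M : ℝ) (n : ℕ) : ℝ := M ^ a - (M - 1/(n:ℝ)) ^ a

/-- `L(D,E) = (|D|−m)(M^a−|D|^a)^{−1/a}E/|D|
      + ((|D|−m)|D|^a + m(M^a−|D|^a))(M^a−|D|^a)^{−1−1/a}|D|^{−3}(D·E)D`. -/
def Lmap (a m M : ℝ) (D E : Matrix (Fin 3) (Fin 3) ℝ) : Matrix (Fin 3) (Fin 3) ℝ :=
  ((mnorm D - m) * (M ^ a - mnorm D ^ a) ^ (-1/a) / mnorm D) • E +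
    (((mnorm D - m) * mnorm D ^ a + m * (M ^ a - mnorm D ^ a)) *
      (M ^ a - mnorm D ^ a) ^ (-1 - 1/a) * mdot D E / mnorm D ^ 3) • D

/-- `L_n(D,E) = c_n^{−1/a}((|D|−m)E/|D| + m(D·E)D/|D|³)`. -/
def Lnmap (a m M : ℝ) (n : ℕ) (D E : Matrix (Fin 3) (Fin 3) ℝ) : Matrix (Fin 3) (Fin 3) ℝ :=
  (cn a M n ^ (-1/a)) •
    (((mnorm D - m) / mnorm D) • E + (m * mdot D E / mnorm D ^ 3) • D)

/-- `Q(D,E) = (|D|−m)(M^a−|D|^a)^{−1/a}|E|²/|D|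
      + ((|D|−m)|D|^a + m(M^a−|D|^a))(M^a−|D|^a)^{−1−1/a}|D|^{−3}(D·E)²`. -/
def Qmap (a m M : ℝ) (D E : Matrix (Fin 3) (Fin 3) ℝ) : ℝ :=
  (mnorm D - m) * (M ^ a - mnorm D ^ a) ^ (-1/a) * mnorm E ^ 2 / mnorm D +
    ((mnorm D - m) * mnorm D ^ a + m * (M ^ a - mnorm D ^ a)) *
      (M ^ a - mnorm D ^ a) ^ (-1 - 1/a) * (mdot D E) ^ 2 / mnorm D ^ 3

/-- `Q_n(D,E) = Q(D,E)` if `|D| < M−1/n`, and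
`Q_n(D,E) = c_n^{−1/a}((|D|−m)|E|²/|D| + m(D·E)²/|D|³)` if `|D| ≥ M−1/n`. -/
def Qn (a m M : ℝ) (n : ℕ) (D E : Matrix (Fin 3) (Fin 3) ℝ) : ℝ :=
  if mnorm D < M - 1/(n:ℝ) then Qmap a m M D E
  else cn a M n ^ (-1/a) *
    ((mnorm D - m) * mnorm E ^ 2 / mnorm D + m * (mdot D E) ^ 2 / mnorm D ^ 3)

lemma mdot_self_nonneg (A : Matrix (Fin 3) (Fin 3) ℝ) : 0 ≤ mdot A A := by
  refine Finset.sum_nonneg fun i _ => Finset.sum_nonneg fun j _ => mul_self_nonneg _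

lemma mnorm_nonneg (A : Matrix (Fin 3) (Fin 3) ℝ) : 0 ≤ mnorm A := Real.sqrt_nonneg _

lemma mnorm_sq (A : Matrix (Fin 3) (Fin 3) ℝ) : mnorm A ^ 2 = mdot A A :=
  Real.sq_sqrt (mdot_self_nonneg A)

lemma mdot_expand (x y : ℝ) (A B : Matrix (Fin 3) (Fin 3) ℝ) :
    mdot (x • A + y • B) (x • A + y • B) =
      x^2 * mdot A A + 2*(x*y) * mdot A B + y^2 * mdot B B := by
  simp only [mdot, Matrix.add_apply, Matrix.smul_apply, smul_eq_mul, Finset.mul_sum,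
    ← Finset.sum_add_distrib]
  refine Finset.sum_congr rfl fun i _ => Finset.sum_congr rfl fun j _ => by ring

lemma mdot_smul_smul (x : ℝ) (A : Matrix (Fin 3) (Fin 3) ℝ) :
    mdot (x • A) (x • A) = x^2 * mdot A A := by
  simp only [mdot, Matrix.smul_apply, smul_eq_mul, Finset.mul_sum]
  refine Finset.sum_congr rfl fun i _ => Finset.sum_congr rfl fun j _ => by ring

lemma mnorm_smul (x : ℝ) (A : Matrix (Fin 3) (Fin 3) ℝ) : mnorm (x • A) = |x| * mnorm A := by
  rw [mnorm, mnorm, mdot_smul_smul, Real.sqrt_mul (sq_nonneg x), Real.sqrt_sq_eq_abs]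

lemma key_ineq (x y : ℝ) (A B : Matrix (Fin 3) (Fin 3) ℝ) :
    mnorm (x • A + y • B) ^ 2 ≤ 2 * (x^2 * mnorm A ^ 2 + y^2 * mnorm B ^ 2) := by
  rw [mnorm_sq, mnorm_sq, mnorm_sq, mdot_expand]
  have h := mdot_self_nonneg (x • A + (-y) • B)
  rw [mdot_expand] at h
  nlinarith [h]

lemma core2 (m d e p : ℝ) (hm : 0 < m) (hmd : m < d) :
    2 * (((d - m)/d)^2 * e^2 + (m * p / d^3)^2 * d^2) ≤
      2 * ((d - m) * e^2 / d + m * p^2 / d^3) := by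
  have hd0 : 0 < d := hm.trans hmd
  have h1 : ((d - m)/d)^2 * e^2 ≤ (d - m) * e^2 / d := by
    have ha1 : 0 ≤ (d - m)/d := div_nonneg (by linarith) hd0.le
    have ha2 : (d - m)/d ≤ 1 := by rw [div_le_one hd0]; linarith
    have h := mul_le_mul_of_nonneg_right
      (by nlinarith : ((d - m)/d)^2 ≤ (d - m)/d) (sq_nonneg e)
    calc ((d - m)/d)^2 * e^2 ≤ ((d - m)/d) * e^2 := h
      _ = (d - m) * e^2 / d := by ring
  have h2 : (m * p / d^3)^2 * d^2 ≤ m * p^2 / d^3 := by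
    have hkey : (m * p / d^3)^2 * d^2 = (m/d) * (m * p^2 / d^3) := by
      field_simp
    rw [hkey]
    have hb1 : m/d ≤ 1 := by rw [div_le_one hd0]; linarith
    have hb2 : 0 ≤ m * p^2 / d^3 := by positivity
    calc (m/d) * (m * p^2 / d^3) ≤ 1 * (m * p^2 / d^3) :=
        mul_le_mul_of_nonneg_right hb1 hb2
      _ = m * p^2 / d^3 := one_mul _
  linarith


lemma core1 (a m M d e p : ℝ) (ha : 0 < a) (hm : 0 < m) (hmM : m < M)
    (hd : (M + m)/2 ≤ d) (hdM : d < M) :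
    2 * (((d - m) * (M^a - d^a) ^ (-1/a) / d)^2 * e^2 +
      (((d - m) * d^a + m * (M^a - d^a)) * (M^a - d^a) ^ (-1 - 1/a) * p / d^3)^2 * d^2)
    ≤ (2 * ((M^a * (2/(M-m))^a + 2*m/(M-m) + 1)/m)) *
        (1 + (d - m) * (M^a - d^a)^(-1/a))^(1+a) *
      ((d - m) * (M^a - d^a) ^ (-1/a) * e^2 / d +
       ((d - m) * d^a + m * (M^a - d^a)) * (M^a - d^a) ^ (-1 - 1/a) * p^2 / d^3) := by
  have hd0 : 0 < d := by linarith
  have hmd : m < d := by linarith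
  have hgpos : (0:ℝ) < M^a - d^a := sub_pos.mpr (Real.rpow_lt_rpow hd0.le hdM ha)
  set g : ℝ := M^a - d^a with hgdef
  clear_value g
  have hgi : 0 < g ^ (-1/a) := Real.rpow_pos_of_pos hgpos _
  set s : ℝ := (d - m) * g ^ (-1/a) with hsdef
  clear_value s
  have hs : 0 < s := by rw [hsdef]; exact mul_pos (by linarith : (0:ℝ) < d - m) hgi
  set t : ℝ := (1 + s) ^ (1 + a) with htdef
  clear_value t
  have ht1 : 1 ≤ t := by
    rw [htdef]
    have h0 : (1+s)^(0:ℝ) ≤ (1+s)^(1+a) :=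
      Real.rpow_le_rpow_of_exponent_le (by linarith) (by linarith)
    simpa using h0
  have ht0 : 0 < t := lt_of_lt_of_le one_pos ht1
  have hst : s ≤ t := by
    rw [htdef]
    have h1 : (1+s)^(1:ℝ) ≤ (1+s)^(1+a) :=
      Real.rpow_le_rpow_of_exponent_le (by linarith) (by linarith)
    rw [Real.rpow_one] at h1; linarith
  have hsat : s ^ a * s ≤ t := by
    have h1 : s ^ a * s = s ^ (a + 1) := by
      rw [Real.rpow_add hs, Real.rpow_one]
    have h2 : s ^ (a + 1) ≤ (1 + s) ^ (a + 1) :=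
      Real.rpow_le_rpow hs.le (by linarith) (by linarith)
    rw [h1]
    calc s ^ (a+1) ≤ (1+s)^(a+1) := h2
      _ = t := by rw [htdef, add_comm a 1]
  have hMm : (0:ℝ) < M - m := by linarith
  have h1 : g ^ (-1/a) ≤ 2/(M-m) * s := by
    have h2 : (M-m)/2 * g^(-1/a) ≤ s := by
      rw [hsdef]
      exact mul_le_mul_of_nonneg_right (by linarith) hgi.le
    have h3 := mul_le_mul_of_nonneg_left h2 (by positivity : (0:ℝ) ≤ 2/(M-m))
    calc g^(-1/a) = 2/(M-m) * ((M-m)/2 * g^(-1/a)) := by field_simp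
      _ ≤ 2/(M-m) * s := h3
  have hginv : g⁻¹ ≤ (2/(M-m))^a * s^a := by
    have h3 : g⁻¹ = (g^(-1/a))^a := by
      rw [← Real.rpow_mul hgpos.le, div_mul_cancel₀ _ (ne_of_gt ha), Real.rpow_neg_one]
    calc g⁻¹ = (g^(-1/a))^a := h3
      _ ≤ (2/(M-m)*s)^a := Real.rpow_le_rpow hgi.le h1 ha.le
      _ = (2/(M-m))^a * s^a := Real.mul_rpow (by positivity) hs.le
  -- split exponent
  have hsplit : g ^ (-1 - 1/a) = g⁻¹ * g ^ (-1/a) := by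
    rw [show (-1 - 1/a : ℝ) = (-1) + (-1/a) by ring, Real.rpow_add hgpos, Real.rpow_neg_one]
  have hda : d^a ≤ M^a := Real.rpow_le_rpow hd0.le hdM.le ha.le
  have hda0 : 0 ≤ d^a := Real.rpow_nonneg hd0.le a
  have hMa0 : 0 < M^a := Real.rpow_pos_of_pos (by linarith) a
  have hq0 : (0:ℝ) < (2/(M-m))^a := Real.rpow_pos_of_pos (by positivity) a
  have hsa0 : 0 ≤ s^a := Real.rpow_nonneg hs.le a
  set C1 : ℝ := (M^a * (2/(M-m))^a + 2*m/(M-m) + 1)/m with hC1def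
  clear_value C1
  have hC1m : C1 * m = M^a * (2/(M-m))^a + 2*m/(M-m) + 1 := by
    rw [hC1def]; field_simp
  -- Bound K * g^(-1-1/a)
  set K : ℝ := (d - m) * d^a + m * g with hKdef
  clear_value K
  have hK0 : 0 < K := by
    have : 0 < (d-m) * d^a + m * g := by
      have : 0 < m * g := mul_pos hm hgpos
      nlinarith [mul_nonneg (show (0:ℝ) ≤ d - m by linarith) hda0]
    simpa [hKdef] using this
  have hKid : K * g ^ (-1 - 1/a) = s * d^a * g⁻¹ + m * g ^ (-1/a) := by
    rw [hsplit, hKdef, hsdef]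
    field_simp
  have hKb : K * g ^ (-1 - 1/a) ≤ (C1 * m - 1) * t := by
    rw [hKid]
    have b1 : s * d^a * g⁻¹ ≤ M^a * (2/(M-m))^a * t := by
      have c1 : s * d^a * g⁻¹ ≤ s * M^a * ((2/(M-m))^a * s^a) := by
        have e1 : s * d^a * g⁻¹ ≤ s * M^a * g⁻¹ := by
          apply mul_le_mul_of_nonneg_right _ (inv_nonneg.mpr hgpos.le)
          exact mul_le_mul_of_nonneg_left hda hs.le
        have e2 : s * M^a * g⁻¹ ≤ s * M^a * ((2/(M-m))^a * s^a) := by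
          apply mul_le_mul_of_nonneg_left hginv (by positivity)
        linarith
      have c2 : s * M^a * ((2/(M-m))^a * s^a) = M^a * (2/(M-m))^a * (s^a * s) := by ring
      have c3 : M^a * (2/(M-m))^a * (s^a * s) ≤ M^a * (2/(M-m))^a * t :=
        mul_le_mul_of_nonneg_left hsat (by positivity)
      linarith [c1, c2.symm ▸ c3]
    have b2 : m * g ^ (-1/a) ≤ 2*m/(M-m) * t := by
      have e1 : m * g^(-1/a) ≤ m * (2/(M-m) * s) := mul_le_mul_of_nonneg_left h1 hm.le
      have e2 : m * (2/(M-m) * s) ≤ m * (2/(M-m) * t) := by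
        apply mul_le_mul_of_nonneg_left _ hm.le
        exact mul_le_mul_of_nonneg_left hst (by positivity)
      calc m * g^(-1/a) ≤ m * (2/(M-m) * t) := by linarith
        _ = 2*m/(M-m) * t := by ring
    have : (C1 * m - 1) * t = M^a * (2/(M-m))^a * t + 2*m/(M-m) * t := by
      rw [hC1m]; ring
    linarith
  have hC1ge : 1/m ≤ C1 := by
    rw [hC1def]
    refine (div_le_div_iff_of_pos_right hm).mpr ?_
    nlinarith [mul_pos hMa0 hq0, div_nonneg (by positivity : (0:ℝ) ≤ 2*m) hMm.le]
  have hC1pos : 0 < C1 := lt_of_lt_of_le (by positivity) hC1ge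
  have h_tm : t / m ≤ C1 * t := by
    have : t / m = (1/m) * t := by ring
    rw [this]
    exact mul_le_mul_of_nonneg_right hC1ge ht0.le
  -- coefficient bound A
  have hA : s / d ≤ C1 * t := by
    have e23 : s / d ≤ t / m := div_le_div₀ ht0.le hst hm hmd.le
    linarith
  set u : ℝ := g ^ (-1 - 1/a) with hudef
  clear_value u
  have hu : 0 ≤ u := by rw [hudef]; exact Real.rpow_nonneg hgpos.le _
  -- coefficient bound B
  have hB : K * u / d ≤ C1 * t := by
    have hKu0 : 0 ≤ K * u := mul_nonneg hK0.le hu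
    have e1 : K * u / d ≤ K * u / m := div_le_div₀ hKu0 le_rfl hm hmd.le
    have e2 : K * u / m ≤ (C1 * m - 1) * t / m := (div_le_div_iff_of_pos_right hm).mpr hKb
    have e3 : (C1 * m - 1) * t / m = C1 * t - t/m := by field_simp
    have e4 : 0 < t / m := by positivity
    rw [e3] at e2
    linarith
  -- assembly
  have hx1 : 0 ≤ s * e^2 / d := by positivity
  have hx2 : 0 ≤ K * u * p^2 / d^3 := by
    apply div_nonneg (mul_nonneg (mul_nonneg hK0.le hu) (sq_nonneg p)) (by positivity)
  have c1 : (s/d)^2 * e^2 ≤ C1 * t * (s * e^2 / d) := by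
    have e1 : (s/d)^2 * e^2 = (s/d) * (s * e^2 / d) := by ring
    rw [e1]
    exact mul_le_mul_of_nonneg_right hA hx1
  have c2 : (K * u * p / d^3)^2 * d^2 ≤ C1 * t * (K * u * p^2 / d^3) := by
    have e1 : (K * u * p / d^3)^2 * d^2 = (K * u / d) * (K * u * p^2 / d^3) := by
      field_simp
    rw [e1]
    exact mul_le_mul_of_nonneg_right hB hx2
  calc 2 * ((s/d)^2 * e^2 + (K * u * p / d^3)^2 * d^2)
      ≤ 2 * (C1 * t * (s * e^2 / d) + C1 * t * (K * u * p^2 / d^3)) := by linarith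
    _ = 2 * C1 * t * (s * e^2 / d + K * u * p^2 / d^3) := by ring

/-- For `2/n ≤ M − m` there is `C = C(n,m,M,a) > 0` such that for all symmetric `D, E`
with `|D| ≥ (M+m)/2`: if `|D| < M − 1/n` then
`|L(D,E)|² ≤ C (1 + |S_n(D)|)^{1+a} Q_n(D,E)`, and if `|D| ≥ M − 1/n` then
`|L_n(D,E)|² ≤ C (1 + |S_n(D)|)^{1+a} Q_n(D,E)`. -/
theorem Snmap_derivative_estimate (a m M : ℝ) (ha : 0 < a) (hm : 0 < m) (hmM : m < M)
    (n : ℕ) (hn : 1 ≤ n) (hmn : 2/(n:ℝ) ≤ M - m) :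
    ∃ C : ℝ, 0 < C ∧ ∀ D E : Matrix (Fin 3) (Fin 3) ℝ, D.IsSymm → E.IsSymm →
      (M + m)/2 ≤ mnorm D →
      (mnorm D < M - 1/(n:ℝ) →
        mnorm (Lmap a m M D E) ^ 2 ≤
          C * (1 + mnorm (Snmap a m M n D)) ^ (1 + a) * Qn a m M n D E) ∧
      (M - 1/(n:ℝ) ≤ mnorm D →
        mnorm (Lnmap a m M n D E) ^ 2 ≤
          C * (1 + mnorm (Snmap a m M n D)) ^ (1 + a) * Qn a m M n D E) := by
  have hn0 : (0:ℝ) < n := by exact_mod_cast Nat.lt_of_lt_of_le Nat.zero_lt_one hn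
  have hninv : (0:ℝ) < 1/(n:ℝ) := by positivity
  have h12 : (1:ℝ)/(n:ℝ) ≤ 2/(n:ℝ) := by
    gcongr
    norm_num
  have hMm : (0:ℝ) < M - m := by linarith
  have hMn0 : (0:ℝ) < M - 1/(n:ℝ) := by linarith
  have hMpos : (0:ℝ) < M := by linarith
  have hc : 0 < cn a M n := by
    rw [cn]
    exact sub_pos.mpr (Real.rpow_lt_rpow hMn0.le (by linarith) ha)
  have hk : 0 < cn a M n ^ (-1/a) := Real.rpow_pos_of_pos hc _
  have hMa0 : 0 < M^a := Real.rpow_pos_of_pos hMpos a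
  have hq0 : 0 < (2/(M-m))^a := Real.rpow_pos_of_pos (by positivity) a
  have hC1pos : 0 < (M^a * (2/(M-m))^a + 2*m/(M-m) + 1)/m := by
    apply div_pos ?_ hm
    nlinarith [mul_pos hMa0 hq0, div_pos (by linarith : (0:ℝ) < 2*m) hMm]
  refine ⟨2*((M^a * (2/(M-m))^a + 2*m/(M-m) + 1)/m) + 2*(cn a M n ^ (-1/a)) + 1,
    by linarith, ?_⟩
  intro D E _ _ hDlow
  have hd0 : 0 < mnorm D := by linarith
  have hmd : m < mnorm D := by linarith
  have hS0 : 0 ≤ mnorm (Snmap a m M n D) := mnorm_nonneg _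
  have hT0 : (0:ℝ) ≤ (1 + mnorm (Snmap a m M n D)) ^ (1 + a) :=
    Real.rpow_nonneg (by linarith) _
  have hT1 : (1:ℝ) ≤ (1 + mnorm (Snmap a m M n D)) ^ (1 + a) := by
    have h0 : (1 + mnorm (Snmap a m M n D)) ^ (0:ℝ) ≤
        (1 + mnorm (Snmap a m M n D)) ^ (1 + a) :=
      Real.rpow_le_rpow_of_exponent_le (by linarith) (by linarith)
    simpa using h0
  constructor
  · -- case |D| < M - 1/n
    intro hlt
    have hdM : mnorm D < M := by linarith
    have hgpos : 0 < M^a - mnorm D ^ a :=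
      sub_pos.mpr (Real.rpow_lt_rpow hd0.le hdM ha)
    have hSn : mnorm (Snmap a m M n D) =
        (mnorm D - m) * (M^a - mnorm D ^ a) ^ (-1/a) := by
      simp only [Snmap]
      rw [min_eq_left hlt.le, max_eq_left (by linarith : (0:ℝ) ≤ mnorm D - m),
        mnorm_smul, abs_of_nonneg (div_nonneg
          (mul_nonneg (by linarith) (Real.rpow_nonneg hgpos.le _)) hd0.le),
        div_mul_cancel₀ _ hd0.ne']
    have hQ0 : 0 ≤ Qmap a m M D E := by
      rw [Qmap]
      have t1 : 0 ≤ (mnorm D - m) * (M ^ a - mnorm D ^ a) ^ (-1/a) * mnorm E ^ 2 / mnorm D :=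
        div_nonneg (mul_nonneg (mul_nonneg (by linarith)
          (Real.rpow_nonneg hgpos.le _)) (sq_nonneg _)) hd0.le
      have t2 : 0 ≤ ((mnorm D - m) * mnorm D ^ a + m * (M ^ a - mnorm D ^ a)) *
          (M ^ a - mnorm D ^ a) ^ (-1 - 1/a) * (mdot D E) ^ 2 / mnorm D ^ 3 := by
        apply div_nonneg ?_ (by positivity)
        apply mul_nonneg (mul_nonneg ?_ (Real.rpow_nonneg hgpos.le _)) (sq_nonneg _)
        have : 0 ≤ (mnorm D - m) * mnorm D ^ a :=
          mul_nonneg (by linarith) (Real.rpow_nonneg hd0.le _)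
        nlinarith [mul_pos hm hgpos]
      linarith
    have hQn : Qn a m M n D E = Qmap a m M D E := by
      rw [Qn, if_pos hlt]
    rw [hQn, hSn]
    calc mnorm (Lmap a m M D E) ^ 2
        ≤ 2 * (((mnorm D - m) * (M ^ a - mnorm D ^ a) ^ (-1/a) / mnorm D)^2 * mnorm E ^ 2 +
            (((mnorm D - m) * mnorm D ^ a + m * (M ^ a - mnorm D ^ a)) *
              (M ^ a - mnorm D ^ a) ^ (-1 - 1/a) * mdot D E / mnorm D ^ 3)^2 * mnorm D ^ 2) := by
          rw [Lmap]
          exact key_ineq _ _ E D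
      _ ≤ (2 * ((M^a * (2/(M-m))^a + 2*m/(M-m) + 1)/m)) *
            (1 + (mnorm D - m) * (M^a - mnorm D ^ a)^(-1/a))^(1+a) * Qmap a m M D E := by
          rw [Qmap]
          exact core1 a m M (mnorm D) (mnorm E) (mdot D E) ha hm hmM hDlow hdM
      _ ≤ (2*((M^a * (2/(M-m))^a + 2*m/(M-m) + 1)/m) + 2*(cn a M n ^ (-1/a)) + 1) *
            (1 + (mnorm D - m) * (M^a - mnorm D ^ a)^(-1/a))^(1+a) * Qmap a m M D E := by
          rw [← hSn] at *
          nlinarith [mul_nonneg hT0 hQ0, hk]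
  · -- case |D| ≥ M - 1/n
    intro hge
    have hnotlt : ¬ (mnorm D < M - 1/(n:ℝ)) := not_lt.mpr hge
    have hW0 : 0 ≤ (mnorm D - m) * mnorm E ^ 2 / mnorm D + m * (mdot D E) ^ 2 / mnorm D ^ 3 := by
      have t1 : 0 ≤ (mnorm D - m) * mnorm E ^ 2 / mnorm D :=
        div_nonneg (mul_nonneg (by linarith) (sq_nonneg _)) hd0.le
      have t2 : 0 ≤ m * (mdot D E) ^ 2 / mnorm D ^ 3 :=
        div_nonneg (mul_nonneg hm.le (sq_nonneg _)) (by positivity)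
      linarith
    have hQn : Qn a m M n D E = cn a M n ^ (-1/a) *
        ((mnorm D - m) * mnorm E ^ 2 / mnorm D + m * (mdot D E) ^ 2 / mnorm D ^ 3) := by
      rw [Qn, if_neg hnotlt]
    rw [hQn]
    have hLn : mnorm (Lnmap a m M n D E) = cn a M n ^ (-1/a) *
        mnorm (((mnorm D - m) / mnorm D) • E + (m * mdot D E / mnorm D ^ 3) • D) := by
      rw [Lnmap, mnorm_smul, abs_of_nonneg hk.le]
    have hkW0 : 0 ≤ cn a M n ^ (-1/a) *
        ((mnorm D - m) * mnorm E ^ 2 / mnorm D + m * (mdot D E) ^ 2 / mnorm D ^ 3) :=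
      mul_nonneg hk.le hW0
    calc mnorm (Lnmap a m M n D E) ^ 2
        = (cn a M n ^ (-1/a))^2 *
            mnorm (((mnorm D - m) / mnorm D) • E + (m * mdot D E / mnorm D ^ 3) • D) ^ 2 := by
          rw [hLn]; ring
      _ ≤ (cn a M n ^ (-1/a))^2 * (2 * (((mnorm D - m) / mnorm D)^2 * mnorm E ^ 2 +
            (m * mdot D E / mnorm D ^ 3)^2 * mnorm D ^ 2)) :=
          mul_le_mul_of_nonneg_left (key_ineq _ _ E D) (sq_nonneg _)
      _ ≤ (cn a M n ^ (-1/a))^2 * (2 * ((mnorm D - m) * mnorm E ^ 2 / mnorm D +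
            m * (mdot D E) ^ 2 / mnorm D ^ 3)) :=
          mul_le_mul_of_nonneg_left (core2 m (mnorm D) (mnorm E) (mdot D E) hm hmd)
            (sq_nonneg _)
      _ = 2 * (cn a M n ^ (-1/a)) * ((cn a M n ^ (-1/a)) *
            ((mnorm D - m) * mnorm E ^ 2 / mnorm D + m * (mdot D E) ^ 2 / mnorm D ^ 3)) := by
          ring
      _ ≤ (2*((M^a * (2/(M-m))^a + 2*m/(M-m) + 1)/m) + 2*(cn a M n ^ (-1/a)) + 1) *
            (1 + mnorm (Snmap a m M n D)) ^ (1 + a) * ((cn a M n ^ (-1/a)) *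
            ((mnorm D - m) * mnorm E ^ 2 / mnorm D + m * (mdot D E) ^ 2 / mnorm D ^ 3)) := by
          have hCle : 2*(cn a M n ^ (-1/a)) ≤
              (2*((M^a * (2/(M-m))^a + 2*m/(M-m) + 1)/m) + 2*(cn a M n ^ (-1/a)) + 1) *
              (1 + mnorm (Snmap a m M n D)) ^ (1 + a) := by
            nlinarith [hC1pos, hk, hT1]
          exact mul_le_mul_of_nonneg_right hCle hkW0
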